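/- Let $w_1,\dots,w_\kappa$ be nonnegative reals summing to $1$ and let $G(s) = \frac{1}{\kappa}\sum_i e^{-w_i\kappa s}$. Then for every $s > 0$, $G(s) - G(2s) \le \sqrt{G(2s) - G(4s)}$. -/

import Mathlib

theorem stmt5 (κ : ℕ) (hκ : 0 < κ) (w : Fin κ → ℝ) (hw : ∀ i, 0 ≤ w i)
    (hsum : ∑ i, w i = 1) (G : ℝ → ℝ)
    (hG : ∀ s, G s = (1 / κ) * ∑ i, Real.exp (-(w i * κ * s))) :
    ∀ s : ℝ, 0 < s → G s - G (2 * s) ≤ Real.sqrt (G (2 * s) - G (4 * s)) := by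
  intro s hs
  set x : Fin κ → ℝ := fun i => Real.exp (-(w i * κ * s)) with hx
  have hx01 : ∀ i, 0 < x i ∧ x i ≤ 1 := by
    intro i
    refine ⟨Real.exp_pos _, ?_⟩
    rw [show (1:ℝ) = Real.exp 0 by simp]
    apply Real.exp_le_exp.2
    have : 0 ≤ w i * κ * s := mul_nonneg (mul_nonneg (hw i) (Nat.cast_nonneg κ)) hs.le
    linarith
  have hpow : ∀ (c : ℕ) i, Real.exp (-(w i * κ * ((c:ℝ) * s))) = x i ^ c := by
    intro c i
    rw [hx]
    rw [← Real.exp_nat_mul]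
    ring_nf
  have h2 : G (2 * s) = (1 / κ) * ∑ i, x i ^ 2 := by
    rw [hG]; congr 1; apply Finset.sum_congr rfl; intro i _
    exact_mod_cast hpow 2 i
  have h4 : G (4 * s) = (1 / κ) * ∑ i, x i ^ 4 := by
    rw [hG]; congr 1; apply Finset.sum_congr rfl; intro i _
    exact_mod_cast hpow 4 i
  have h1 : G s = (1 / κ) * ∑ i, x i := by rw [hG]
  have hκR : (0:ℝ) < κ := by exact_mod_cast hκ
  set a : Fin κ → ℝ := fun i => x i * (1 - x i) with ha
  have hlhs : G s - G (2 * s) = (1 / κ) * ∑ i, a i := by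
    rw [h1, h2, ← mul_sub, ← Finset.sum_sub_distrib]
    congr 1; apply Finset.sum_congr rfl; intro i _; rw [ha]; ring
  have hbound : (1 / κ) * ∑ i, a i ^ 2 ≤ G (2 * s) - G (4 * s) := by
    rw [h2, h4, ← mul_sub, ← Finset.sum_sub_distrib]
    apply mul_le_mul_of_nonneg_left _ (by positivity)
    apply Finset.sum_le_sum
    intro i _
    have h1 := (hx01 i).1
    have h2 := (hx01 i).2
    have hai : a i = x i * (1 - x i) := rfl
    rw [hai]
    nlinarith [mul_nonneg (mul_nonneg (mul_nonneg h1.le h1.le) h1.le) (sub_nonneg.2 h2)]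
  have hCS : ((1 / κ) * ∑ i, a i) ^ 2 ≤ (1 / κ) * ∑ i, a i ^ 2 := by
    have := sq_sum_le_card_mul_sum_sq (s := Finset.univ) (f := a)
    simp only [Finset.card_univ, Fintype.card_fin] at this
    rw [mul_pow]
    calc (1 / (κ:ℝ)) ^ 2 * (∑ i, a i) ^ 2
        ≤ (1 / (κ:ℝ)) ^ 2 * ((κ:ℝ) * ∑ i, a i ^ 2) := by
          apply mul_le_mul_of_nonneg_left _ (by positivity)
          exact_mod_cast this
      _ = (1 / κ) * ∑ i, a i ^ 2 := by field_simp
  have hnn : 0 ≤ (1 / κ) * ∑ i, a i := by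
    apply mul_nonneg (by positivity)
    apply Finset.sum_nonneg
    intro i _
    exact mul_nonneg (hx01 i).1.le (by linarith [(hx01 i).2])
  rw [hlhs]
  rw [Real.le_sqrt hnn (le_trans (le_trans (sq_nonneg _) hCS) hbound)]
  exact le_trans hCS hbound
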